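/- arXiv:1512.07716 — 3 statements merged into one kernel-verified Lean document; each statement's English description precedes it below -/
import Mathlib

section
/- For any real number u, exp(-2·max(0, 1-u)) = ∫₀^∞ (1/√(2πγ)) · exp(-(1+γ-u)²/(2γ)) dγ. -/
set_option maxHeartbeats 1000000
open MeasureTheory Real Set

lemma img_sq : (fun t : ℝ => t^2) '' Ioi 0 = Ioi 0 := by
  ext x
  constructor
  · rintro ⟨t, ht, rfl⟩; exact pow_pos (mem_Ioi.1 ht) 2
  · intro hx; exact ⟨Real.sqrt x, Real.sqrt_pos.2 hx, Real.sq_sqrt hx.le⟩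

lemma img_inv (c : ℝ) (hc : 0 < c) : (fun t : ℝ => c / t) '' Ioi 0 = Ioi 0 := by
  ext x
  constructor
  · rintro ⟨t, ht, rfl⟩; exact div_pos hc ht
  · intro hx; exact ⟨c / x, div_pos hc hx, by field_simp⟩

lemma img_sub (c : ℝ) (hc : 0 < c) : (fun t : ℝ => t - c / t) '' Ioi 0 = univ := by
  ext s
  simp only [mem_univ, iff_true]
  set r := Real.sqrt (s^2 + 4*c) with hr
  have hr2 : r^2 = s^2 + 4*c := Real.sq_sqrt (by nlinarith [sq_nonneg s])
  have hrs : |s| < r := by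
    rw [← Real.sqrt_sq_eq_abs]
    exact Real.sqrt_lt_sqrt (sq_nonneg s) (by linarith)
  have ht : (0:ℝ) < (s + r)/2 := by
    have := abs_le.1 hrs.le
    nlinarith [abs_nonneg s]
  refine ⟨(s+r)/2, ht, ?_⟩
  have hne : (s+r)/2 ≠ 0 := ne_of_gt ht
  have hcd : c / ((s+r)/2) = (r - s)/2 := by
    rw [div_eq_iff hne]; nlinarith
  show (s+r)/2 - c/((s+r)/2) = s
  rw [hcd]; ring

lemma inj_sub (c : ℝ) (hc : 0 < c) : InjOn (fun t : ℝ => t - c / t) (Ioi 0) := by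
  have : StrictMonoOn (fun t : ℝ => t - c / t) (Ioi 0) := by
    intro a ha b hb hab
    have : c / b < c / a := div_lt_div_of_pos_left hc ha hab
    simp only; linarith
  exact this.injOn

lemma A_integrable (c : ℝ) (hc : 0 < c) :
    IntegrableOn (fun t : ℝ => Real.exp (-(t - c/t)^2/2)) (Ioi 0) := by
  have hg : IntegrableOn (fun t : ℝ => Real.exp c * Real.exp (-(1/2 : ℝ) * t^2)) (Ioi 0) :=
    ((integrable_exp_neg_mul_sq (by norm_num : (0:ℝ) < 1/2)).const_mul _).integrableOn
  refine hg.mono' ?_ ?_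
  · refine (Measurable.aestronglyMeasurable ?_)
    exact (((measurable_id.sub (measurable_const.div measurable_id)).pow_const 2).neg.div_const 2).exp
  · filter_upwards [ae_restrict_mem measurableSet_Ioi] with t ht
    rw [Real.norm_eq_abs, abs_of_pos (Real.exp_pos _), ← Real.exp_add]
    apply Real.exp_le_exp.2
    have ht' : (0:ℝ) < t := ht
    have h1 : (t - c/t)^2 = t^2 - 2*c + (c/t)^2 := by
      field_simp; ring
    nlinarith [sq_nonneg (c/t)]

lemma K_val (c : ℝ) (hc : 0 < c) :
    ∫ t in Ioi (0:ℝ), Real.exp (-(t - c/t)^2/2) = Real.sqrt (2*Real.pi) / 2 := by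
  set A : ℝ → ℝ := fun t => Real.exp (-(t - c/t)^2/2) with hA_def
  have hA : IntegrableOn A (Ioi 0) := A_integrable c hc
  -- substitution t ↦ c/t
  have hderiv1 : ∀ x ∈ Ioi (0:ℝ), HasDerivWithinAt (fun t : ℝ => c / t) (-(c/x^2)) (Ioi 0) x := by
    intro x hx
    have h := ((hasDerivAt_const x c).div (hasDerivAt_id x)
      (ne_of_gt (show (0:ℝ) < x from hx))).hasDerivWithinAt (s := Ioi (0:ℝ))
    refine h.congr_deriv ?_
    simp only [id]; ring
  have hinj1 : InjOn (fun t : ℝ => c / t) (Ioi 0) := by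
    intro a ha b hb h
    have ha' : (0:ℝ) < a := ha
    have hb' : (0:ℝ) < b := hb
    field_simp at h
    exact h.symm
  have sub1 := integral_image_eq_integral_abs_deriv_smul measurableSet_Ioi hderiv1 hinj1 A
  rw [img_inv c hc] at sub1
  have sub1' : ∫ t in Ioi (0:ℝ), A t = ∫ t in Ioi (0:ℝ), (c/t^2) * A t := by
    rw [sub1]
    apply setIntegral_congr_fun measurableSet_Ioi
    intro t ht
    have ht' : (0:ℝ) < t := ht
    have h1 : |-(c/t^2)| = c/t^2 := by
      rw [abs_neg, abs_of_pos (by positivity)]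
    simp only [smul_eq_mul]
    rw [h1]
    congr 1
    simp only [hA_def]
    congr 1
    have : c/t - c/(c/t) = -(t - c/t) := by field_simp; ring
    rw [this]; ring
  -- integrability of B
  have hB : IntegrableOn (fun t : ℝ => (c/t^2) * A t) (Ioi 0) := by
    have h := (integrableOn_image_iff_integrableOn_abs_deriv_smul measurableSet_Ioi hderiv1 hinj1 A)
    rw [img_inv c hc] at h
    have h2 := h.1 hA
    apply h2.congr_fun ?_ measurableSet_Ioi
    intro t ht
    have ht' : (0:ℝ) < t := ht
    have h1 : |-(c/t^2)| = c/t^2 := by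
      rw [abs_neg, abs_of_pos (by positivity)]
    simp only [smul_eq_mul]
    rw [h1]
    congr 1
    simp only [hA_def]
    congr 1
    have : c/t - c/(c/t) = -(t - c/t) := by field_simp; ring
    rw [this]; ring
  -- substitution s = t - c/t
  have hderiv2 : ∀ x ∈ Ioi (0:ℝ),
      HasDerivWithinAt (fun t : ℝ => t - c / t) (1 + c/x^2) (Ioi 0) x := by
    intro x hx
    have h := ((hasDerivAt_id x).sub ((hasDerivAt_const x c).div (hasDerivAt_id x)
      (ne_of_gt (show (0:ℝ) < x from hx)))).hasDerivWithinAt (s := Ioi (0:ℝ))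
    refine h.congr_deriv ?_
    have hx' : x ≠ 0 := ne_of_gt (show (0:ℝ) < x from hx)
    simp only [id]; ring
  have sub2 := integral_image_eq_integral_abs_deriv_smul measurableSet_Ioi hderiv2 (inj_sub c hc)
    (fun s => Real.exp (-(1/2 : ℝ) * s^2))
  rw [img_sub c hc, Measure.restrict_univ] at sub2
  have hL : (∫ x : ℝ, Real.exp (-(1/2 : ℝ) * x^2)) = Real.sqrt (2*Real.pi) := by
    rw [integral_gaussian]
    congr 1
    rw [div_div_eq_mul_div, div_one]; ring
  have sub2' : Real.sqrt (2*Real.pi)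
      = ∫ t in Ioi (0:ℝ), (A t + (c/t^2) * A t) := by
    rw [← hL, sub2]
    apply setIntegral_congr_fun measurableSet_Ioi
    intro t ht
    have ht' : (0:ℝ) < t := ht
    have h1 : |1 + c/t^2| = 1 + c/t^2 := abs_of_pos (by positivity)
    simp only [smul_eq_mul]
    rw [h1]
    have h2 : Real.exp (-(1/2 : ℝ) * (t - c/t)^2) = A t := by
      simp only [hA_def]; congr 1; ring
    rw [h2]; ring
  rw [integral_add hA hB, ← sub1'] at sub2'
  linarith

lemma J_val (c : ℝ) (hc : 0 ≤ c) :
    ∫ t in Ioi (0:ℝ), Real.exp (-c^2/(2*t^2) - t^2/2)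
      = Real.exp (-c) * (Real.sqrt (2*Real.pi) / 2) := by
  rcases eq_or_lt_of_le hc with rfl | hc'
  · have : ∫ t in Ioi (0:ℝ), Real.exp (-(0:ℝ)^2/(2*t^2) - t^2/2)
        = ∫ t in Ioi (0:ℝ), Real.exp (-(1/2:ℝ) * t^2) := by
      apply setIntegral_congr_fun measurableSet_Ioi
      intro t ht
      show Real.exp (-(0:ℝ)^2/(2*t^2) - t^2/2) = Real.exp (-(1/2:ℝ) * t^2)
      congr 1
      ring
    rw [this, integral_gaussian_Ioi]
    rw [neg_zero, Real.exp_zero, one_mul]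
    congr 2
    rw [div_div_eq_mul_div, div_one]; ring
  · have : ∫ t in Ioi (0:ℝ), Real.exp (-c^2/(2*t^2) - t^2/2)
        = ∫ t in Ioi (0:ℝ), Real.exp (-c) * Real.exp (-(t - c/t)^2/2) := by
      apply setIntegral_congr_fun measurableSet_Ioi
      intro t ht
      have ht' : (0:ℝ) < t := ht
      show Real.exp (-c^2/(2*t^2) - t^2/2) = Real.exp (-c) * Real.exp (-(t - c/t)^2/2)
      rw [← Real.exp_add]
      congr 1
      field_simp
      ring
    rw [this, MeasureTheory.integral_const_mul, K_val c hc']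

theorem hinge_scale_mixture (u : ℝ) :
    Real.exp (-2 * max 0 (1 - u)) =
      ∫ γ in Set.Ioi (0:ℝ),
        (1 / Real.sqrt (2 * Real.pi * γ)) *
          Real.exp (-(1 + γ - u)^2 / (2 * γ)) := by
  set a : ℝ := 1 - u with ha_def
  have hderiv0 : ∀ x ∈ Ioi (0:ℝ), HasDerivWithinAt (fun t : ℝ => t^2) (2*x) (Ioi 0) x := by
    intro x hx
    have h := (hasDerivAt_pow 2 x).hasDerivWithinAt (s := Ioi (0:ℝ))
    refine h.congr_deriv ?_
    norm_num
  have hinj0 : InjOn (fun t : ℝ => t^2) (Ioi 0) := by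
    intro x hx y hy h
    have hx' : (0:ℝ) < x := hx
    have hy' : (0:ℝ) < y := hy
    rw [← Real.sqrt_sq hx'.le, show x^2 = y^2 from h, Real.sqrt_sq hy'.le]
  have sub0 := integral_image_eq_integral_abs_deriv_smul measurableSet_Ioi hderiv0 hinj0
    (fun γ => (1 / Real.sqrt (2 * Real.pi * γ)) * Real.exp (-(1 + γ - u)^2 / (2 * γ)))
  rw [img_sq] at sub0
  have hsqrt : (0:ℝ) < Real.sqrt (2*Real.pi) := Real.sqrt_pos.2 (by positivity)
  have step : ∫ γ in Set.Ioi (0:ℝ),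
        (1 / Real.sqrt (2 * Real.pi * γ)) * Real.exp (-(1 + γ - u)^2 / (2 * γ))
      = ∫ t in Ioi (0:ℝ),
        (2 / Real.sqrt (2*Real.pi) * Real.exp (-a)) * Real.exp (-|a|^2/(2*t^2) - t^2/2) := by
    rw [sub0]
    apply setIntegral_congr_fun measurableSet_Ioi
    intro t ht
    have ht' : (0:ℝ) < t := ht
    simp only [smul_eq_mul]
    rw [abs_of_pos (by positivity : (0:ℝ) < 2*t)]
    have hs : Real.sqrt (2 * Real.pi * t^2) = Real.sqrt (2*Real.pi) * t := by
      rw [Real.sqrt_mul (by positivity), Real.sqrt_sq ht'.le]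
    have he : Real.exp (-(1 + t^2 - u)^2 / (2 * t^2))
        = Real.exp (-a) * Real.exp (-|a|^2/(2*t^2) - t^2/2) := by
      rw [← Real.exp_add]
      congr 1
      rw [sq_abs]
      field_simp [ha_def]
      ring
    rw [hs, he]
    field_simp
  rw [step, MeasureTheory.integral_const_mul, J_val |a| (abs_nonneg a)]
  have hcollect : 2 / Real.sqrt (2*Real.pi) * Real.exp (-a) * (Real.exp (-|a|) * (Real.sqrt (2*Real.pi)/2))
      = Real.exp (-a) * Real.exp (-|a|) := by
    field_simp
  rw [hcollect, ← Real.exp_add]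
  have hmax : -2 * max 0 a = -a + -|a| := by
    rcases le_total a 0 with h | h
    · rw [max_eq_left h, abs_of_nonpos h]; ring
    · rw [max_eq_right h, abs_of_nonneg h]; ring
  rw [hmax]
end

section
/- For any real number a and any ε ≥ 0, exp(-2·max(0, |a| - ε)) = (∫₀^∞ (1/√(2πγ)) exp(-(γ + a - ε)²/(2γ)) dγ) · (∫₀^∞ (1/√(2πω)) exp(-(ω - a - ε)²/(2ω)) dω). -/
open MeasureTheory Real Set

namespace EpsAux

lemma phi_deriv {s : ℝ} : ∀ u ∈ Ioi (0:ℝ),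
    HasDerivWithinAt (fun u : ℝ => u - s / u) (1 + s / u ^ 2) (Ioi 0) u := by
  intro u hu
  have hu0 : (0:ℝ) < u := hu
  have h : HasDerivAt (fun u : ℝ => u - s / u) (1 + s / u ^ 2) u := by
    have h1 : HasDerivAt (fun u : ℝ => s * u⁻¹) (s * -(u ^ 2)⁻¹) u :=
      (hasDerivAt_inv hu0.ne').const_mul s
    have h2 : HasDerivAt (fun u : ℝ => u - s * u⁻¹) (1 - s * -(u ^ 2)⁻¹) u :=
      (hasDerivAt_id u).sub h1
    simp only [div_eq_mul_inv] at *
    convert h2 using 1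
    ring
  exact h.hasDerivWithinAt

lemma phi_inj {s : ℝ} (hs : 0 < s) : InjOn (fun u : ℝ => u - s / u) (Ioi 0) := by
  intro x hx y hy h
  have hx0 : (0:ℝ) < x := hx
  have hy0 : (0:ℝ) < y := hy
  simp only at h
  have key : (x - y) * (x * y + s) = 0 := by
    field_simp at h
    nlinarith [h]
  have hpos : 0 < x * y + s := by positivity
  have := mul_eq_zero.1 key
  rcases this with h1 | h1
  · linarith [sub_eq_zero.1 h1]
  · linarith

lemma phi_image {s : ℝ} (hs : 0 < s) :
    (fun u : ℝ => u - s / u) '' Ioi 0 = univ := by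
  apply eq_univ_of_forall
  intro v
  have hd : (0:ℝ) < v ^ 2 + 4 * s := by nlinarith
  set r := Real.sqrt (v ^ 2 + 4 * s) with hrdef
  have hr : 0 < r := Real.sqrt_pos.2 hd
  have hr2 : r ^ 2 = v ^ 2 + 4 * s := Real.sq_sqrt hd.le
  have habs : |v| < r := by
    nlinarith [sq_abs v, abs_nonneg v]
  have hu : 0 < (v + r) / 2 := by
    have := neg_abs_le v
    linarith
  refine ⟨(v + r) / 2, hu, ?_⟩
  have hvr : (0:ℝ) < v + r := by linarith
  field_simp
  nlinarith [hr2, hvr]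


lemma psi_deriv {s : ℝ} : ∀ u ∈ Ioi (0:ℝ),
    HasDerivWithinAt (fun u : ℝ => s / u) (-(s / u ^ 2)) (Ioi 0) u := by
  intro u hu
  have hu0 : (0:ℝ) < u := hu
  have h1 : HasDerivAt (fun u : ℝ => s * u⁻¹) (s * -(u ^ 2)⁻¹) u :=
    (hasDerivAt_inv hu0.ne').const_mul s
  have h : HasDerivAt (fun u : ℝ => s / u) (-(s / u ^ 2)) u := by
    simp only [div_eq_mul_inv]
    convert h1 using 1
    ring
  exact h.hasDerivWithinAt

lemma psi_inj {s : ℝ} (hs : 0 < s) : InjOn (fun u : ℝ => s / u) (Ioi 0) := by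
  intro x hx y hy h
  have hx0 : (0:ℝ) < x := hx
  have hy0 : (0:ℝ) < y := hy
  simp only at h
  field_simp at h
  exact h.symm

lemma psi_image {s : ℝ} (hs : 0 < s) :
    (fun u : ℝ => s / u) '' Ioi 0 = Ioi 0 := by
  ext x
  simp only [mem_image, mem_Ioi]
  constructor
  · rintro ⟨y, hy, rfl⟩; positivity
  · intro hx
    exact ⟨s / x, by positivity, by field_simp⟩

lemma psi_pt {s u : ℝ} (hs : 0 < s) (hu : 0 < u) :
    |(-(s / u ^ 2))| • Real.exp (-(s / u - s / (s / u)) ^ 2 / 2)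
      = (s / u ^ 2) * Real.exp (-(u - s / u) ^ 2 / 2) := by
  have h1 : s / (s / u) = u := by field_simp
  rw [h1, abs_neg, abs_of_nonneg (by positivity : (0:ℝ) ≤ s / u ^ 2), smul_eq_mul]
  congr 2
  ring

lemma J_integrable {s : ℝ} (_hs : 0 ≤ s) :
    IntegrableOn (fun u : ℝ => Real.exp (-(u - s / u) ^ 2 / 2)) (Ioi 0) := by
  have hg : Integrable (fun u : ℝ => Real.exp s * Real.exp (-(1/2 : ℝ) * u ^ 2)) :=
    (integrable_exp_neg_mul_sq (by norm_num : (0:ℝ) < 1/2)).const_mul _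
  apply Integrable.mono' hg.restrict
  · apply Measurable.aestronglyMeasurable
    exact Real.measurable_exp.comp
      ((((measurable_id.sub (measurable_const.div measurable_id)).pow_const 2).neg).div_const 2)
  · filter_upwards [ae_restrict_mem measurableSet_Ioi] with u hu
    have hu0 : (0:ℝ) < u := hu
    rw [Real.norm_eq_abs, abs_of_pos (Real.exp_pos _), ← Real.exp_add]
    apply Real.exp_le_exp.2
    have h1 : u * (s / u) = s := mul_div_cancel₀ _ hu0.ne'
    nlinarith [sq_nonneg (s / u)]

lemma J_eq {s : ℝ} (hs : 0 ≤ s) :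
    ∫ u in Ioi (0:ℝ), Real.exp (-(u - s / u) ^ 2 / 2) = Real.sqrt (2 * π) / 2 := by
  rcases eq_or_lt_of_le hs with rfl | hs
  · simp only [zero_div, sub_zero]
    have : ∀ u : ℝ, Real.exp (-u ^ 2 / 2) = Real.exp (-(1/2 : ℝ) * u ^ 2) := by
      intro u; congr 1; ring
    simp_rw [this]
    rw [integral_gaussian_Ioi]
    norm_num
    ring
  · -- s > 0
    have hI := J_integrable hs.le
    -- change of variables with φ
    have cov1 := integral_image_eq_integral_abs_deriv_smul measurableSet_Ioi
      (phi_deriv (s := s)) (phi_inj hs) (fun v => Real.exp (-v ^ 2 / 2))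
    rw [phi_image hs, setIntegral_univ] at cov1
    -- change of variables with ψ
    have cov2 := integral_image_eq_integral_abs_deriv_smul measurableSet_Ioi
      (psi_deriv (s := s)) (psi_inj hs)
      (fun x => Real.exp (-(x - s / x) ^ 2 / 2))
    rw [psi_image hs] at cov2
    have hIineq := (integrableOn_image_iff_integrableOn_abs_deriv_smul measurableSet_Ioi
      (psi_deriv (s := s)) (psi_inj hs)
      (fun x => Real.exp (-(x - s / x) ^ 2 / 2)))
    rw [psi_image hs] at hIineq
    have hI2 : IntegrableOn (fun u : ℝ => (s / u ^ 2) * Real.exp (-(u - s / u) ^ 2 / 2))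
        (Ioi 0) := by
      apply (IntegrableOn.congr_fun (hIineq.1 hI) ?_ measurableSet_Ioi)
      intro u hu
      exact psi_pt hs hu
    -- rewrite cov2 RHS
    have cov2' : ∫ u in Ioi (0:ℝ), Real.exp (-(u - s / u) ^ 2 / 2)
        = ∫ u in Ioi (0:ℝ), (s / u ^ 2) * Real.exp (-(u - s / u) ^ 2 / 2) := by
      rw [cov2]
      apply setIntegral_congr_fun measurableSet_Ioi
      intro u hu
      exact psi_pt hs hu
    -- gaussian
    have hgauss : ∫ v : ℝ, Real.exp (-v ^ 2 / 2) = Real.sqrt (2 * π) := by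
      have : ∀ v : ℝ, Real.exp (-v ^ 2 / 2) = Real.exp (-(1/2 : ℝ) * v ^ 2) := by
        intro v; congr 1; ring
      simp_rw [this, integral_gaussian]
      norm_num
      ring
    -- rewrite cov1 RHS
    have cov1' : Real.sqrt (2 * π)
        = (∫ u in Ioi (0:ℝ), Real.exp (-(u - s / u) ^ 2 / 2))
          + ∫ u in Ioi (0:ℝ), (s / u ^ 2) * Real.exp (-(u - s / u) ^ 2 / 2) := by
      rw [← hgauss, cov1, ← integral_add hI hI2]
      apply setIntegral_congr_fun measurableSet_Ioi
      intro u hu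
      have hu0 : (0:ℝ) < u := hu
      simp only [smul_eq_mul]
      rw [abs_of_nonneg (by positivity : (0:ℝ) ≤ 1 + s / u ^ 2)]
      ring
    rw [← cov2'] at cov1'
    linarith


lemma key (t : ℝ) :
    ∫ γ in Ioi (0:ℝ), (1 / Real.sqrt (2 * π * γ)) * Real.exp (-(γ + t) ^ 2 / (2 * γ))
      = Real.exp (-2 * max 0 t) := by
  have h2 := integral_comp_rpow_Ioi_of_pos
    (g := fun γ : ℝ => (1 / Real.sqrt (2 * π * γ)) * Real.exp (-(γ + t) ^ 2 / (2 * γ)))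
    (two_pos)
  rw [← h2]
  have hstep : ∀ u ∈ Ioi (0:ℝ),
      ((2:ℝ) * u ^ ((2:ℝ) - 1)) • ((fun γ : ℝ =>
        (1 / Real.sqrt (2 * π * γ)) * Real.exp (-(γ + t) ^ 2 / (2 * γ))) (u ^ (2:ℝ)))
      = (2 / Real.sqrt (2 * π)) * Real.exp (-(u + t / u) ^ 2 / 2) := by
    intro u hu
    have hu0 : (0:ℝ) < u := hu
    have hr : u ^ (2:ℝ) = u ^ 2 := by
      rw [show (2:ℝ) = ((2:ℕ):ℝ) by norm_num, Real.rpow_natCast]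
    have hr1 : u ^ ((2:ℝ) - 1) = u := by
      norm_num
    simp only [hr, hr1, smul_eq_mul]
    have hsq : Real.sqrt (2 * π * u ^ 2) = Real.sqrt (2 * π) * u := by
      rw [Real.sqrt_mul (by positivity), Real.sqrt_sq hu0.le]
    rw [hsq]
    have hexp : -(u ^ 2 + t) ^ 2 / (2 * u ^ 2) = -(u + t / u) ^ 2 / 2 := by
      field_simp
    rw [hexp]
    have hs0 : (0:ℝ) < Real.sqrt (2 * π) := Real.sqrt_pos.2 (by positivity)
    field_simp
  rw [setIntegral_congr_fun measurableSet_Ioi hstep]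
  have hs0 : (0:ℝ) < Real.sqrt (2 * π) := Real.sqrt_pos.2 (by positivity)
  rcases le_or_gt t 0 with ht | ht
  · have heq : ∀ u ∈ Ioi (0:ℝ), (2 / Real.sqrt (2 * π)) * Real.exp (-(u + t / u) ^ 2 / 2)
        = (2 / Real.sqrt (2 * π)) * Real.exp (-(u - (-t) / u) ^ 2 / 2) := by
      intro u hu; congr 3; ring
    rw [setIntegral_congr_fun measurableSet_Ioi heq, integral_const_mul,
      J_eq (by linarith : (0:ℝ) ≤ -t), max_eq_left ht]
    rw [mul_zero, Real.exp_zero]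
    field_simp
  · have heq : ∀ u ∈ Ioi (0:ℝ), (2 / Real.sqrt (2 * π)) * Real.exp (-(u + t / u) ^ 2 / 2)
        = ((2 / Real.sqrt (2 * π)) * Real.exp (-2 * t)) * Real.exp (-(u - t / u) ^ 2 / 2) := by
      intro u hu
      have hu0 : (0:ℝ) < u := hu
      rw [mul_assoc, ← Real.exp_add]
      congr 2
      field_simp
      ring
    rw [setIntegral_congr_fun measurableSet_Ioi heq, integral_const_mul,
      J_eq ht.le, max_eq_right ht.le]
    field_simp

end EpsAux

theorem eps_insensitive_double_scale_mixture (a ε : ℝ) (hε : 0 ≤ ε) :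
    Real.exp (-2 * max 0 (|a| - ε)) =
      (∫ γ in Set.Ioi (0:ℝ),
        (1 / Real.sqrt (2 * Real.pi * γ)) * Real.exp (-(γ + a - ε)^2 / (2 * γ))) *
      (∫ ω in Set.Ioi (0:ℝ),
        (1 / Real.sqrt (2 * Real.pi * ω)) * Real.exp (-(ω - a - ε)^2 / (2 * ω))) := by
  simp_rw [show ∀ γ:ℝ, γ + a - ε = γ + (a - ε) from fun γ => by ring,
    show ∀ ω:ℝ, ω - a - ε = ω + (-a - ε) from fun ω => by ring,
    EpsAux.key, ← Real.exp_add]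
  congr 1
  have hmax : max 0 (|a| - ε) = max 0 (a - ε) + max 0 (-a - ε) := by
    rcases le_total 0 a with h | h
    · rw [abs_of_nonneg h, max_eq_left (by linarith : -a - ε ≤ 0), add_zero]
    · rw [abs_of_nonpos h, max_eq_left (by linarith : a - ε ≤ 0), zero_add]
  rw [hmax]
  ring
end

section
/- Let λ > 0 and data x_d ∈ ℝ^K, y_d ∈ {1,-1}. Any minimizer w* of F(w) = (λ/2)‖w‖² + 2∑_d max(0, 1 - y_d⟨w,x_d⟩) lies in the linear span of {x₁,…,x_D}. -/
open RealInnerProductSpace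

theorem svm_representer (K D : ℕ) (lam : ℝ) (hlam : 0 < lam)
    (x : Fin D → EuclideanSpace ℝ (Fin K)) (y : Fin D → ℝ)
    (hy : ∀ d, y d = 1 ∨ y d = -1)
    (F : EuclideanSpace ℝ (Fin K) → ℝ)
    (hF : ∀ w, F w = lam / 2 * ‖w‖^2 + 2 * ∑ d, max 0 (1 - y d * ⟪w, x d⟫))
    (wstar : EuclideanSpace ℝ (Fin K))
    (hmin : ∀ w, F wstar ≤ F w) :
    wstar ∈ Submodule.span ℝ (Set.range x) := by
  by_contra hns
  set V := Submodule.span ℝ (Set.range x) with hV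
  haveI : FiniteDimensional ℝ V :=
    FiniteDimensional.span_of_finite ℝ (Set.finite_range x)
  set p : EuclideanSpace ℝ (Fin K) := ((Submodule.orthogonalProjectionOnto V wstar : V) : EuclideanSpace ℝ (Fin K)) with hp
  have hmem : wstar - p ∈ Vᗮ := Submodule.sub_starProjection_mem_orthogonal (K := V) wstar
  have hinner : ∀ d, ⟪p, x d⟫ = ⟪wstar, x d⟫ := by
    intro d
    have hx : x d ∈ V := Submodule.subset_span ⟨d, rfl⟩
    have h0 : ⟪x d, wstar - p⟫ = 0 := hmem (x d) hx
    rw [inner_sub_right] at h0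
    have := real_inner_comm (x d) p
    have := real_inner_comm (x d) wstar
    linarith
  have hne : wstar - p ≠ 0 := by
    intro h
    apply hns
    have hw : wstar = p := by rwa [sub_eq_zero] at h
    rw [hw]
    exact (Submodule.orthogonalProjectionOnto V wstar).2
  have hperp : ⟪p, wstar - p⟫ = 0 := by
    have hpV : p ∈ V := (Submodule.orthogonalProjectionOnto V wstar).2
    exact hmem p hpV
  have hpyth : ‖wstar‖^2 = ‖p‖^2 + ‖wstar - p‖^2 := by
    have h := norm_add_sq_real p (wstar - p)
    have hsum : p + (wstar - p) = wstar := by abel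
    rw [hsum, hperp] at h
    linarith
  have hpos : 0 < ‖wstar - p‖^2 := pow_pos (norm_pos_iff.mpr hne) 2
  have hnorm : ‖p‖^2 < ‖wstar‖^2 := by linarith
  have hlt : F p < F wstar := by
    rw [hF, hF]
    have hsum : ∑ d, max 0 (1 - y d * ⟪p, x d⟫)
        = ∑ d, max 0 (1 - y d * ⟪wstar, x d⟫) := by
      apply Finset.sum_congr rfl
      intro d _
      rw [hinner]
    rw [hsum]
    nlinarith
  exact absurd (hmin p) (not_le.mpr hlt)
end
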